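/- If I is an independent set in the infinite shift graph Sh_ℕ^2, then the lower density of I satisfies liminf_{n→∞} |I ∩ {(i,j) : 1 ≤ i < j ≤ n}| / C(n,2) ≤ 1/4, where C(n,2) = n(n−1)/2. -/

import Mathlib

/-- Two vertices `(i,j)` and `(i',j')` of the shift graph are adjacent
if `j = i'` or `j' = i` (and they are distinct). -/
abbrev shAdj (p q : ℕ × ℕ) : Prop := p ≠ q ∧ (p.2 = q.1 ∨ q.2 = p.1)

/-- The vertex set of the shift graph `Sh_n^2`: all pairs `(i,j)` with `1 ≤ i < j ≤ n`. -/
def shiftVerts (n : ℕ) : Finset (ℕ × ℕ) :=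
  (Finset.Icc 1 n ×ˢ Finset.Icc 1 n).filter fun p => p.1 < p.2

open Classical in
/-- The independence number of the subgraph of the shift graph induced on `G`. -/
noncomputable def indepNum2 (G : Finset (ℕ × ℕ)) : ℕ :=
  (G.powerset.filter fun I => ∀ p ∈ I, ∀ q ∈ I, ¬ shAdj p q).sup Finset.card

/-- `α_n^2`: the minimum of `α(Sh_n^2[G])/|G|` over nonempty `G ⊆ V(Sh_n^2)`. -/
noncomputable def alpha2 (n : ℕ) : ℝ :=
  sInf {r : ℝ | ∃ G : Finset (ℕ × ℕ), G.Nonempty ∧ G ⊆ shiftVerts n ∧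
    r = (indepNum2 G : ℝ) / G.card}

open Classical in
/-- The number of elements of `I` among the pairs `(i,j)` with `1 ≤ i < j ≤ n`. -/
noncomputable def countIn (I : Set (ℕ × ℕ)) (n : ℕ) : ℕ :=
  ((shiftVerts n).filter fun p => p ∈ I).card

/- ### Auxiliary real inequalities -/

lemma shaux0 (B y : ℝ) (hB : 1 ≤ B) (hy0 : 0 ≤ y) (hy : y ≤ B) :
    y/B - y^2/(2*B^2) - (y/(B+1) - y^2/(2*(B+1)^2)) ≤ 1/(4*B) := by
  have hB0 : (0:ℝ) < B := by linarith
  have hB1 : (0:ℝ) < B + 1 := by linarith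
  rw [← sub_nonneg]
  have e : 1/(4*B) - (y/B - y^2/(2*B^2) - (y/(B+1) - y^2/(2*(B+1)^2)))
      = (2*(2*B+1)*y^2 - 4*B*(B+1)*y + B*(B+1)^2) / (4*B^2*(B+1)^2) := by
    field_simp
    ring
  rw [e]
  apply div_nonneg _ (by positivity)
  nlinarith [sq_nonneg (2*(2*B+1)*y - 2*B*(B+1)), sq_nonneg (B+1), hB0.le]

lemma shaux1 (B y : ℝ) (hB : 1 ≤ B) (hy0 : 0 ≤ y) (hy : y ≤ B) :
    (B - y)/(B+1)^2 ≤ ((y+1)/(B+1) - (y+1)^2/(2*(B+1)^2)) - (y/B - y^2/(2*B^2)) + 1/(4*B) := by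
  have hB0 : (0:ℝ) < B := by linarith
  have hB1 : (0:ℝ) < B + 1 := by linarith
  rw [← sub_nonneg]
  have e : ((y+1)/(B+1) - (y+1)^2/(2*(B+1)^2)) - (y/B - y^2/(2*B^2)) + 1/(4*B) - (B - y)/(B+1)^2
      = (2*(2*B+1)*y^2 - 4*B*(B+1)*y + B*(B^2+4*B+1)) / (4*B^2*(B+1)^2) := by
    field_simp
    ring
  rw [e]
  apply div_nonneg _ (by positivity)
  nlinarith [sq_nonneg (2*(2*B+1)*y - 2*B*(B+1)), hB0.le]

lemma shaux2 (n : ℝ) (hn : 1 ≤ n) :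
    1/(n+1) - (3/2)*(1/n - 1/(n+1)) ≤ (n*(n-1)/2)*(1/n^2 - 1/(n+1)^2) := by
  have hn0 : (0:ℝ) < n := by linarith
  have hn1 : (0:ℝ) < n + 1 := by linarith
  rw [← sub_nonneg]
  have e : (n*(n-1)/2)*(1/n^2 - 1/(n+1)^2) - (1/(n+1) - (3/2)*(1/n - 1/(n+1)))
      = 1 / (n*(n+1)^2) := by
    field_simp
    ring
  rw [e]
  positivity

/- ### Combinatorial quantities attached to an independent set -/

open Classical in
/-- number of `a ≤ b` with `(a,b) ∈ I` (the "row count" at second coordinate `b`). -/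
noncomputable def rI (I : Set (ℕ × ℕ)) (b : ℕ) : ℕ :=
  ((Finset.Icc 1 b).filter fun a => (a, b) ∈ I).card

open Classical in
/-- number of `b' ≤ n` which occur as second coordinates of elements of `I`. -/
noncomputable def betaI (I : Set (ℕ × ℕ)) (n : ℕ) : ℕ :=
  ((Finset.Icc 1 n).filter fun b => 0 < rI I b).card

lemma betaI_le (I : Set (ℕ × ℕ)) (n : ℕ) : betaI I n ≤ n := by
  classical
  calc betaI I n ≤ (Finset.Icc 1 n).card := Finset.card_filter_le _ _
    _ = n := by simp

lemma betaI_succ (I : Set (ℕ × ℕ)) (n : ℕ) :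
    betaI I (n+1) = betaI I n + (if 0 < rI I (n+1) then 1 else 0) := by
  classical
  unfold betaI
  have h : Finset.Icc 1 (n+1) = insert (n+1) (Finset.Icc 1 n) := by
    ext x
    simp only [Finset.mem_Icc, Finset.mem_insert]
    omega
  rw [h, Finset.filter_insert]
  split
  · rw [Finset.card_insert_of_notMem (by simp)]
  · simp

lemma rI_one (I : Set (ℕ × ℕ)) (hI : I ⊆ {p : ℕ × ℕ | 1 ≤ p.1 ∧ p.1 < p.2}) :
    rI I 1 = 0 := by
  classical
  unfold rI
  rw [Finset.card_eq_zero, Finset.filter_eq_empty_iff]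
  intro a ha hmem
  have := hI hmem
  simp only [Set.mem_setOf_eq] at this
  simp only [Finset.mem_Icc] at ha
  omega

/-- Key disjointness consequence: if `b` is a second coordinate, then
`rI I b + betaI I b ≤ b`. -/
lemma rI_add_betaI_le (I : Set (ℕ × ℕ))
    (hI : I ⊆ {p : ℕ × ℕ | 1 ≤ p.1 ∧ p.1 < p.2})
    (hind : ∀ p ∈ I, ∀ q ∈ I, ¬ shAdj p q) (b : ℕ) :
    0 < rI I b → rI I b + betaI I b ≤ b := by
  classical
  intro _
  have hdisj : Disjoint ((Finset.Icc 1 b).filter fun a => (a, b) ∈ I)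
      ((Finset.Icc 1 b).filter fun c => 0 < rI I c) := by
    rw [Finset.disjoint_left]
    intro a ha1 ha2
    obtain ⟨-, habI⟩ := Finset.mem_filter.mp ha1
    obtain ⟨-, hra⟩ := Finset.mem_filter.mp ha2
    obtain ⟨a', ha'⟩ := Finset.card_pos.mp hra
    have ha'I : (a', a) ∈ I := (Finset.mem_filter.mp ha').2
    have hlt : a' < a := (hI ha'I).2
    refine hind _ ha'I _ habI ⟨?_, Or.inl rfl⟩
    intro hcontr
    have : a' = a := congrArg Prod.fst hcontr
    omega
  calc rI I b + betaI I b
      = (((Finset.Icc 1 b).filter fun a => (a, b) ∈ I) ∪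
          ((Finset.Icc 1 b).filter fun c => 0 < rI I c)).card :=
        (Finset.card_union_of_disjoint hdisj).symm
    _ ≤ (Finset.Icc 1 b).card := Finset.card_le_card
        (Finset.union_subset (Finset.filter_subset _ _) (Finset.filter_subset _ _))
    _ = b := by simp

lemma countIn_le_sum_rI (I : Set (ℕ × ℕ)) (n : ℕ) :
    countIn I n ≤ ∑ b ∈ Finset.Icc 1 n, rI I b := by
  classical
  unfold countIn
  have hmem : ∀ p ∈ (shiftVerts n).filter (fun p => p ∈ I), p.2 ∈ Finset.Icc 1 n := by
    intro p hp
    exact (Finset.mem_product.mp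
      (Finset.mem_filter.mp ((Finset.mem_filter.mp hp).1)).1).2
  rw [Finset.card_eq_sum_card_fiberwise hmem]
  apply Finset.sum_le_sum
  intro b _
  apply Finset.card_le_card_of_injOn Prod.fst
  · intro p hp
    have h1 := Finset.mem_filter.mp hp
    have hpb : p.2 = b := h1.2
    have h2 := Finset.mem_filter.mp h1.1
    have h3 := Finset.mem_filter.mp h2.1
    have h4 := Finset.mem_product.mp h3.1
    have h5 : p.1 < p.2 := h3.2
    have h6 := Finset.mem_Icc.mp h4.1
    rw [Finset.mem_coe, Finset.mem_filter, Finset.mem_Icc]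
    refine ⟨⟨h6.1, by omega⟩, ?_⟩
    have hpe : (p.1, b) = p := by rw [← hpb]
    rw [hpe]
    exact h2.2
  · intro p hp q hq hfst
    have h1 : p.2 = b := (Finset.mem_filter.mp hp).2
    have h2 : q.2 = b := (Finset.mem_filter.mp hq).2
    exact Prod.ext hfst (h1.trans h2.symm)

/- ### Real-valued sums -/

noncomputable def shSS (I : Set (ℕ × ℕ)) (M : ℕ) : ℝ :=
  ∑ b ∈ Finset.Icc 1 M, (rI I b : ℝ)/(b:ℝ)^2

noncomputable def shPP (I : Set (ℕ × ℕ)) (n : ℕ) : ℝ :=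
  ∑ b ∈ Finset.Icc 1 n, (rI I b : ℝ)

noncomputable def shPhi (I : Set (ℕ × ℕ)) (n : ℕ) : ℝ :=
  (betaI I n : ℝ)/(n:ℝ) - (betaI I n : ℝ)^2/(2*(n:ℝ)^2)

noncomputable def shH (M : ℕ) : ℝ := ∑ i ∈ Finset.range M, 1/((i:ℝ)+1)

lemma shPP_nonneg (I : Set (ℕ × ℕ)) (n : ℕ) : 0 ≤ shPP I n := by
  unfold shPP
  positivity

lemma shPP_succ (I : Set (ℕ × ℕ)) (n : ℕ) (hn : 1 ≤ n + 1) :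
    shPP I (n+1) = shPP I n + (rI I (n+1) : ℝ) := by
  unfold shPP
  rw [Finset.sum_Icc_succ_top hn]

lemma countIn_le_shPP (I : Set (ℕ × ℕ)) (n : ℕ) : (countIn I n : ℝ) ≤ shPP I n := by
  unfold shPP
  rw [← Nat.cast_sum]
  exact_mod_cast countIn_le_sum_rI I n

/-- Abel summation identity. -/
lemma shSS_eq (I : Set (ℕ × ℕ)) (M : ℕ) (hM : 1 ≤ M) :
    shSS I M = (∑ n ∈ Finset.Ico 1 M, shPP I n * (1/(n:ℝ)^2 - 1/((n:ℝ)+1)^2))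
      + shPP I M / (M:ℝ)^2 := by
  induction M, hM using Nat.le_induction with
  | base =>
    simp [shSS, shPP]
  | succ M hM ih =>
    have h1 : shSS I (M+1) = shSS I M + (rI I (M+1) : ℝ)/((M:ℝ)+1)^2 := by
      unfold shSS
      rw [Finset.sum_Icc_succ_top (by omega : 1 ≤ M + 1)]
      push_cast
      ring
    rw [h1, ih, Finset.sum_Ico_succ_top hM, shPP_succ I M (by omega)]
    push_cast
    ring

/-- The crucial per-step upper bound. -/
lemma shSS_step (I : Set (ℕ × ℕ))
    (hI : I ⊆ {p : ℕ × ℕ | 1 ≤ p.1 ∧ p.1 < p.2})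
    (hind : ∀ p ∈ I, ∀ q ∈ I, ¬ shAdj p q) (b : ℕ) (hb : 1 ≤ b) :
    (rI I (b+1) : ℝ)/((b:ℝ)+1)^2 ≤ shPhi I (b+1) - shPhi I b + 1/(4*(b:ℝ)) := by
  have hB : (1:ℝ) ≤ (b:ℝ) := by exact_mod_cast hb
  have hy0 : (0:ℝ) ≤ (betaI I b : ℝ) := by positivity
  have hy : (betaI I b : ℝ) ≤ (b:ℝ) := by exact_mod_cast betaI_le I b
  by_cases hpos : 0 < rI I (b+1)
  · have hβ : betaI I (b+1) = betaI I b + 1 := by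
      rw [betaI_succ, if_pos hpos]
    have hkey := rI_add_betaI_le I hI hind (b+1) hpos
    rw [hβ] at hkey
    have hr : (rI I (b+1) : ℝ) ≤ (b:ℝ) - (betaI I b : ℝ) := by
      have : (rI I (b+1) : ℝ) + ((betaI I b : ℝ) + 1) ≤ (b:ℝ) + 1 := by exact_mod_cast hkey
      linarith
    have hr0 : (0:ℝ) ≤ (rI I (b+1) : ℝ) := by positivity
    have step1 : (rI I (b+1) : ℝ)/((b:ℝ)+1)^2 ≤ ((b:ℝ) - (betaI I b : ℝ))/((b:ℝ)+1)^2 := by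
      gcongr
    refine step1.trans ?_
    unfold shPhi
    rw [hβ]
    push_cast
    have := shaux1 (b:ℝ) (betaI I b : ℝ) hB hy0 hy
    convert this using 2 <;> push_cast <;> ring
  · have h0 : rI I (b+1) = 0 := by omega
    have hβ : betaI I (b+1) = betaI I b := by
      rw [betaI_succ, if_neg hpos]
      omega
    rw [h0]
    unfold shPhi
    rw [hβ]
    push_cast
    rw [zero_div]
    have := shaux0 (b:ℝ) (betaI I b : ℝ) hB hy0 hy
    linarith

lemma shPhi_le_half (I : Set (ℕ × ℕ)) (n : ℕ) (hn : 1 ≤ n) : shPhi I n ≤ 1/2 := by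
  unfold shPhi
  have hn0 : (0:ℝ) < (n:ℝ) := by exact_mod_cast hn
  have hy : (betaI I n : ℝ) ≤ (n:ℝ) := by exact_mod_cast betaI_le I n
  have hy0 : (0:ℝ) ≤ (betaI I n : ℝ) := by positivity
  rw [← sub_nonneg]
  have e : 1/2 - ((betaI I n : ℝ)/(n:ℝ) - (betaI I n : ℝ)^2/(2*(n:ℝ)^2))
      = ((n:ℝ) - (betaI I n : ℝ))^2 / (2*(n:ℝ)^2) := by
    field_simp
    ring
  rw [e]
  positivity

lemma shSS_le (I : Set (ℕ × ℕ))
    (hI : I ⊆ {p : ℕ × ℕ | 1 ≤ p.1 ∧ p.1 < p.2})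
    (hind : ∀ p ∈ I, ∀ q ∈ I, ¬ shAdj p q) (M : ℕ) (hM : 1 ≤ M) :
    shSS I M ≤ shPhi I M + (1/4) * ∑ i ∈ Finset.Ico 1 M, 1/(i:ℝ) := by
  induction M, hM using Nat.le_induction with
  | base =>
    have h1 : shSS I 1 = 0 := by
      simp [shSS, rI_one I hI]
    rw [h1]
    have hy : (betaI I 1 : ℝ) ≤ 1 := by exact_mod_cast betaI_le I 1
    have hy0 : (0:ℝ) ≤ (betaI I 1 : ℝ) := by positivity
    have : (0:ℝ) ≤ shPhi I 1 := by
      unfold shPhi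
      push_cast
      nlinarith
    simpa using this
  | succ M hM ih =>
    have h1 : shSS I (M+1) = shSS I M + (rI I (M+1) : ℝ)/((M:ℝ)+1)^2 := by
      unfold shSS
      rw [Finset.sum_Icc_succ_top (by omega : 1 ≤ M + 1)]
      push_cast
      ring
    rw [h1, Finset.sum_Ico_succ_top hM]
    have := shSS_step I hI hind M hM
    have hMc : (1:ℝ) ≤ (M:ℝ) := by exact_mod_cast hM
    calc shSS I M + (rI I (M+1) : ℝ)/((M:ℝ)+1)^2
        ≤ (shPhi I M + (1/4) * ∑ i ∈ Finset.Ico 1 M, 1/(i:ℝ))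
          + (shPhi I (M+1) - shPhi I M + 1/(4*(M:ℝ))) := by
          exact add_le_add ih this
      _ = shPhi I (M+1) + (1/4) * (∑ i ∈ Finset.Ico 1 M, 1/(i:ℝ) + 1/(M:ℝ)) := by
          field_simp
          ring

lemma shTele (N M : ℕ) (hNM : N ≤ M) :
    ∑ n ∈ Finset.Ico N M, (1/(n:ℝ) - 1/((n:ℝ)+1)) = 1/(N:ℝ) - 1/(M:ℝ) := by
  induction M, hNM using Nat.le_induction with
  | base => simp
  | succ M hM ih =>
    rw [Finset.sum_Ico_succ_top hM, ih]
    push_cast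
    ring

lemma shH_Ico (N M : ℕ) (hNM : N ≤ M) :
    ∑ n ∈ Finset.Ico N M, 1/((n:ℝ)+1) = shH M - shH N := by
  have := Finset.sum_range_add_sum_Ico (fun n => 1/((n:ℝ)+1)) hNM
  unfold shH
  linarith

lemma shH_mono : Monotone shH := by
  intro a b hab
  apply Finset.sum_le_sum_of_subset_of_nonneg (Finset.range_subset_range.mpr hab)
  intro i _ _
  positivity

lemma shH_Ico_one (M : ℕ) (hM : 1 ≤ M) :
    ∑ i ∈ Finset.Ico 1 M, 1/(i:ℝ) ≤ shH M := by
  rw [Finset.sum_Ico_eq_sum_range]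
  have e : ∀ i ∈ Finset.range (M - 1), 1/((1 + i : ℕ):ℝ) = 1/((i:ℝ)+1) := by
    intro i _
    push_cast
    ring_nf
  rw [Finset.sum_congr rfl e]
  exact shH_mono (by omega)

/-- If `I` is an independent set in the infinite shift graph `Sh_ℕ^2`, then
`liminf_n |I ∩ {(i,j) : 1 ≤ i < j ≤ n}|/C(n,2) ≤ 1/4`. -/
theorem liminf_density_le_quarter (I : Set (ℕ × ℕ))
    (hI : I ⊆ {p : ℕ × ℕ | 1 ≤ p.1 ∧ p.1 < p.2})
    (hind : ∀ p ∈ I, ∀ q ∈ I, ¬ shAdj p q) :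
    Filter.liminf (fun n : ℕ => (countIn I n : ℝ) / ((n : ℝ) * ((n : ℝ) - 1) / 2))
      Filter.atTop ≤ 1/4 := by
  by_contra hcon
  push_neg at hcon
  set f : ℕ → ℝ := fun n => (countIn I n : ℝ) / ((n : ℝ) * ((n : ℝ) - 1) / 2) with hf
  have hf0 : ∀ n, 0 ≤ f n := by
    intro n
    apply div_nonneg (Nat.cast_nonneg _)
    rcases Nat.eq_zero_or_pos n with h | h
    · simp [h]
    · have : (1:ℝ) ≤ (n:ℝ) := by exact_mod_cast h
      nlinarith
  have hbdd : Filter.IsBoundedUnder (· ≥ ·) Filter.atTop f :=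
    Filter.isBoundedUnder_of ⟨0, fun n => hf0 n⟩
  obtain ⟨c, hc14, hcL⟩ := exists_between hcon
  have hev := Filter.eventually_lt_of_lt_liminf hcL hbdd
  rw [Filter.eventually_atTop] at hev
  obtain ⟨N0, hN0⟩ := hev
  set N := max N0 2 with hNdef
  have hN2 : 2 ≤ N := le_max_right _ _
  have hc0 : (0:ℝ) < c := by linarith
  have hcount : ∀ n, N ≤ n → c * ((n:ℝ) * ((n:ℝ) - 1) / 2) ≤ (countIn I n : ℝ) := by
    intro n hn
    have h2n : 2 ≤ n := le_trans hN2 hn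
    have h2nr : (2:ℝ) ≤ (n:ℝ) := by exact_mod_cast h2n
    have hd : (0:ℝ) < (n:ℝ) * ((n:ℝ) - 1) / 2 := by nlinarith
    have hlt := hN0 n (le_trans (le_max_left _ _) hn)
    have := (lt_div_iff₀ hd).mp hlt
    linarith
  -- main bound for all M ≥ N + 1
  have main : ∀ M, N + 1 ≤ M → (c - 1/4) * shH M ≤ 1/2 + 3*c/2 + c * shH N := by
    intro M hM
    have hM1 : 1 ≤ M := by omega
    have hNM : N ≤ M := by omega
    have hΔ : ∀ n : ℕ, 1 ≤ n → (0:ℝ) ≤ 1/(n:ℝ)^2 - 1/((n:ℝ)+1)^2 := by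
      intro n hn
      have h1 : (1:ℝ) ≤ (n:ℝ) := by exact_mod_cast hn
      have e1 : (0:ℝ) < (n:ℝ)^2 := by nlinarith
      have hle : ((n:ℝ))^2 ≤ ((n:ℝ)+1)^2 := by nlinarith
      have := one_div_le_one_div_of_le e1 hle
      linarith
    -- Lower bound of shSS I M
    have low1 : ∑ n ∈ Finset.Ico N M, (countIn I n : ℝ) * (1/(n:ℝ)^2 - 1/((n:ℝ)+1)^2)
        ≤ shSS I M := by
      rw [shSS_eq I M hM1]
      have t1 : ∑ n ∈ Finset.Ico N M, (countIn I n : ℝ) * (1/(n:ℝ)^2 - 1/((n:ℝ)+1)^2)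
          ≤ ∑ n ∈ Finset.Ico N M, shPP I n * (1/(n:ℝ)^2 - 1/((n:ℝ)+1)^2) := by
        apply Finset.sum_le_sum
        intro n hn
        have hn1 : 1 ≤ n := by have := (Finset.mem_Ico.mp hn).1; omega
        exact mul_le_mul_of_nonneg_right (countIn_le_shPP I n) (hΔ n hn1)
      have t2 : ∑ n ∈ Finset.Ico N M, shPP I n * (1/(n:ℝ)^2 - 1/((n:ℝ)+1)^2)
          ≤ ∑ n ∈ Finset.Ico 1 M, shPP I n * (1/(n:ℝ)^2 - 1/((n:ℝ)+1)^2) := by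
        apply Finset.sum_le_sum_of_subset_of_nonneg
          (Finset.Ico_subset_Ico (by omega) le_rfl)
        intro n hn _
        have hn1 : 1 ≤ n := (Finset.mem_Ico.mp hn).1
        exact mul_nonneg (shPP_nonneg I n) (hΔ n hn1)
      have t3 : 0 ≤ shPP I M / (M:ℝ)^2 := by
        apply div_nonneg (shPP_nonneg I M)
        positivity
      linarith
    have low2 : ∑ n ∈ Finset.Ico N M, c * (1/((n:ℝ)+1) - (3/2)*(1/(n:ℝ) - 1/((n:ℝ)+1)))
        ≤ ∑ n ∈ Finset.Ico N M, (countIn I n : ℝ) * (1/(n:ℝ)^2 - 1/((n:ℝ)+1)^2) := by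
      apply Finset.sum_le_sum
      intro n hn
      have hnN : N ≤ n := (Finset.mem_Ico.mp hn).1
      have hn1 : (1:ℝ) ≤ (n:ℝ) := by
        have : 1 ≤ n := by omega
        exact_mod_cast this
      calc c * (1/((n:ℝ)+1) - (3/2)*(1/(n:ℝ) - 1/((n:ℝ)+1)))
          ≤ c * (((n:ℝ)*((n:ℝ)-1)/2)*(1/(n:ℝ)^2 - 1/((n:ℝ)+1)^2)) :=
            mul_le_mul_of_nonneg_left (shaux2 (n:ℝ) hn1) hc0.le
        _ = (c * ((n:ℝ)*((n:ℝ)-1)/2)) * (1/(n:ℝ)^2 - 1/((n:ℝ)+1)^2) := by ring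
        _ ≤ (countIn I n : ℝ) * (1/(n:ℝ)^2 - 1/((n:ℝ)+1)^2) :=
            mul_le_mul_of_nonneg_right (hcount n hnN) (hΔ n (by omega))
    have low3 : ∑ n ∈ Finset.Ico N M, c * (1/((n:ℝ)+1) - (3/2)*(1/(n:ℝ) - 1/((n:ℝ)+1)))
        = c * (shH M - shH N) - (3*c/2) * (1/(N:ℝ) - 1/(M:ℝ)) := by
      have e0 : ∀ n ∈ Finset.Ico N M,
          c * (1/((n:ℝ)+1) - (3/2)*(1/(n:ℝ) - 1/((n:ℝ)+1)))
            = c * (1/((n:ℝ)+1)) - (3*c/2) * (1/(n:ℝ) - 1/((n:ℝ)+1)) := by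
        intro n _
        ring
      rw [Finset.sum_congr rfl e0, Finset.sum_sub_distrib, ← Finset.mul_sum, ← Finset.mul_sum,
        shH_Ico N M hNM, shTele N M hNM]
    -- Upper bound of shSS I M
    have up1 : shSS I M ≤ 1/2 + (1/4) * shH M := by
      have h1 := shSS_le I hI hind M hM1
      have h2 := shPhi_le_half I M hM1
      have h3 := shH_Ico_one M hM1
      nlinarith
    -- Combine
    have hNr : (2:ℝ) ≤ (N:ℝ) := by exact_mod_cast hN2
    have hMr : (0:ℝ) < (M:ℝ) := by
      have : (1:ℕ) ≤ M := hM1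
      exact_mod_cast Nat.lt_of_lt_of_le Nat.zero_lt_one this
    have hsub : 1/(N:ℝ) - 1/(M:ℝ) ≤ 1 := by
      have h1 : 1/(N:ℝ) ≤ 1/2 := by
        rw [div_le_div_iff₀ (by linarith) (by norm_num)]
        linarith
      have h2 : 0 < 1/(M:ℝ) := by positivity
      linarith
    have hmul : c * (1/(N:ℝ) - 1/(M:ℝ)) ≤ c * 1 := by
      apply mul_le_mul_of_nonneg_left hsub hc0.le
    linarith
  -- Contradiction via divergence of the harmonic series
  have htends : Filter.Tendsto shH Filter.atTop Filter.atTop :=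
    Real.tendsto_sum_range_one_div_nat_succ_atTop
  have hcpos : (0:ℝ) < c - 1/4 := by linarith
  set K : ℝ := 1/2 + 3*c/2 + c * shH N with hK
  obtain ⟨M, hHM, hMN⟩ :=
    ((htends.eventually_ge_atTop (K/(c - 1/4) + 1)).and
      (Filter.eventually_ge_atTop (N+1))).exists
  have hmain := main M hMN
  have : (c - 1/4) * (K/(c - 1/4) + 1) ≤ (c - 1/4) * shH M :=
    mul_le_mul_of_nonneg_left hHM hcpos.le
  rw [mul_add, mul_div_cancel₀ _ (ne_of_gt hcpos), mul_one] at this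
  linarith
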